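/- Let E be a Banach space and 1 ≤ p, q < ∞. The space ℓ_{q,p}^mid(E) of mid (q,p)-summable sequences in E, equipped with the norm ‖·‖_{q,p}, is a Banach space (i.e., it is complete). -/

import Mathlib

open NormedSpace MeasureTheory

noncomputable section

/-- A sequence `x` in `E` is weakly `p`-summable: `∑_j |φ(x_j)|^p < ∞` for all `φ ∈ E*`. -/
def WeaklySummable (𝕜 : Type*) [RCLike 𝕜] {E : Type*} [NormedAddCommGroup E]
    [NormedSpace 𝕜 E] (p : ℝ) (x : ℕ → E) : Prop :=
  ∀ φ : StrongDual 𝕜 E, Summable fun j => ‖φ (x j)‖ ^ p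

/-- The weak `p`-norm of a sequence: `sup_{φ ∈ B_{E*}} (∑_j |φ(x_j)|^p)^{1/p}`. -/
def weakNorm (𝕜 : Type*) [RCLike 𝕜] {E : Type*} [NormedAddCommGroup E]
    [NormedSpace 𝕜 E] (p : ℝ) (x : ℕ → E) : ℝ :=
  ⨆ φ : {φ : StrongDual 𝕜 E // ‖φ‖ ≤ 1}, (∑' j, ‖φ.1 (x j)‖ ^ p) ^ (1 / p)

/-- A sequence `x` in `E` is mid `(q,p)`-summable:
`∑_j (∑_n |x_n^*(x_j)|^p)^{q/p} < ∞` for every weakly `p`-summable sequence `(x_n^*)` in `E*`. -/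
def MidSummable (𝕜 : Type*) [RCLike 𝕜] {E : Type*} [NormedAddCommGroup E]
    [NormedSpace 𝕜 E] (q p : ℝ) (x : ℕ → E) : Prop :=
  ∀ xs : ℕ → StrongDual 𝕜 E, WeaklySummable 𝕜 p xs →
    Summable fun j => (∑' n, ‖xs n (x j)‖ ^ p) ^ (q / p)

/-- The mid `(q,p)`-norm:
`sup over (x_n^*) in the closed unit ball of ℓ_p^w(E*)` of
`(∑_j (∑_n |x_n^*(x_j)|^p)^{q/p})^{1/q}`. -/
def midNorm (𝕜 : Type*) [RCLike 𝕜] {E : Type*} [NormedAddCommGroup E]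
    [NormedSpace 𝕜 E] (q p : ℝ) (x : ℕ → E) : ℝ :=
  ⨆ xs : {xs : ℕ → StrongDual 𝕜 E // WeaklySummable 𝕜 p xs ∧ weakNorm 𝕜 p xs ≤ 1},
    (∑' j, (∑' n, ‖xs.1 n (x j)‖ ^ p) ^ (q / p)) ^ (1 / q)

/-- `u : X → Y` is absolutely `p`-summing: there is `C > 0` with
`(∑_{j=1}^k ‖u(x_j)‖^p)^{1/p} ≤ C sup_{φ ∈ B_{X*}} (∑_{j=1}^k |φ(x_j)|^p)^{1/p}`
for all finite families. -/
def AbsolutelySumming (𝕜 : Type*) [RCLike 𝕜] {X Y : Type*} [NormedAddCommGroup X]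
    [NormedSpace 𝕜 X] [NormedAddCommGroup Y] [NormedSpace 𝕜 Y] (p : ℝ)
    (u : X →L[𝕜] Y) : Prop :=
  ∃ C > 0, ∀ (k : ℕ) (z : Fin k → X),
    (∑ j, ‖u (z j)‖ ^ p) ^ (1 / p) ≤
      C * ⨆ φ : {φ : StrongDual 𝕜 X // ‖φ‖ ≤ 1}, (∑ j, ‖φ.1 (z j)‖ ^ p) ^ (1 / p)

/-- The `p`-summing norm `π_p(u)`: the least admissible constant. -/
def piNorm (𝕜 : Type*) [RCLike 𝕜] {X Y : Type*} [NormedAddCommGroup X]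
    [NormedSpace 𝕜 X] [NormedAddCommGroup Y] [NormedSpace 𝕜 Y] (p : ℝ)
    (u : X →L[𝕜] Y) : ℝ :=
  sInf {C : ℝ | 0 < C ∧ ∀ (k : ℕ) (z : Fin k → X),
    (∑ j, ‖u (z j)‖ ^ p) ^ (1 / p) ≤
      C * ⨆ φ : {φ : StrongDual 𝕜 X // ‖φ‖ ≤ 1}, (∑ j, ‖φ.1 (z j)‖ ^ p) ^ (1 / p)}

variable {𝕜 E F : Type*}

section Aux
open ENNReal
variable {𝕜 E : Type*} [RCLike 𝕜] [NormedAddCommGroup E] [NormedSpace 𝕜 E]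
variable {p q : ℝ}

lemma rpow_cancel {a r : ℝ} (ha : 0 ≤ a) (hr : r ≠ 0) : (a ^ (1/r)) ^ r = a := by
  rw [← Real.rpow_mul ha, one_div, inv_mul_cancel₀ hr, Real.rpow_one]

lemma rpow_cancel' {a r : ℝ} (ha : 0 ≤ a) (hr : r ≠ 0) : (a ^ r) ^ (1/r) = a := by
  rw [← Real.rpow_mul ha, one_div, mul_inv_cancel₀ hr, Real.rpow_one]

lemma rpow_div_cancel {a : ℝ} (ha : 0 ≤ a) (hp : p ≠ 0) (q : ℝ) :
    (a ^ p) ^ (q / p) = a ^ q := by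
  rw [← Real.rpow_mul ha]; congr 1; field_simp

lemma WeaklySummable.point {xs : ℕ → StrongDual 𝕜 E}
    (h : WeaklySummable 𝕜 p xs) (y : E) :
    Summable fun n => ‖xs n y‖ ^ p := by
  have := h (NormedSpace.inclusionInDoubleDual 𝕜 E y)
  simpa only [NormedSpace.dual_def] using this

lemma weak_sum_bound_aux {X : Type*} [NormedAddCommGroup X] [NormedSpace 𝕜 X] (hp : 1 ≤ p)
    {xs : ℕ → X} (h : ∀ φ : StrongDual 𝕜 X, Summable fun j => ‖φ (xs j)‖ ^ p) :
    ∃ C : ℝ, 0 ≤ C ∧ ∀ Φ : StrongDual 𝕜 X, ∑' n, ‖Φ (xs n)‖ ^ p ≤ (C * ‖Φ‖) ^ p := by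
  have hp0 : 0 < p := lt_of_lt_of_le one_pos hp
  set P : ℝ≥0∞ := ENNReal.ofReal p with hP
  haveI : Fact (1 ≤ P) := ⟨ENNReal.one_le_ofReal.mpr hp⟩
  have hPt : P.toReal = p := ENNReal.toReal_ofReal hp0.le
  have hPt0 : 0 < P.toReal := by rw [hPt]; exact hp0
  have mem : ∀ (N : ℕ) (Φ : StrongDual 𝕜 X),
      Memℓp (fun n : ℕ => if n < N then Φ (xs n) else 0) P := by
    intro N Φ
    apply memℓp_gen
    apply summable_of_ne_finset_zero (s := Finset.range N)
    intro n hn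
    simp only [Finset.mem_range, not_lt] at hn
    rw [if_neg (by omega), norm_zero, Real.zero_rpow (by rw [hPt]; exact hp0.ne')]
  -- norm formula for the truncations
  have normfun : ∀ (N : ℕ) (Φ : StrongDual 𝕜 X),
      ‖(⟨fun n : ℕ => if n < N then Φ (xs n) else 0, mem N Φ⟩ : lp (fun _ : ℕ => 𝕜) P)‖
        = (∑ n ∈ Finset.range N, ‖Φ (xs n)‖ ^ p) ^ (1/p) := by
    intro N Φ
    rw [lp.norm_eq_tsum_rpow hPt0, hPt]
    congr 1
    rw [tsum_eq_sum (s := Finset.range N) ?_]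
    · apply Finset.sum_congr rfl
      intro n hn
      simp only [Finset.mem_range] at hn
      simp [hn]
    · intro n hn
      simp only [Finset.mem_range, not_lt] at hn
      simp only [if_neg (by omega : ¬ n < N), norm_zero, Real.zero_rpow hp0.ne']
  set T : ∀ _ : ℕ, StrongDual 𝕜 X →ₗ[𝕜] lp (fun _ : ℕ => 𝕜) P := fun N =>
    { toFun := fun Φ => ⟨fun n : ℕ => if n < N then Φ (xs n) else 0, mem N Φ⟩
      map_add' := by
        intro Φ Ψ
        apply Subtype.ext
        funext n
        show (if n < N then (Φ + Ψ) (xs n) else 0)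
          = (if n < N then Φ (xs n) else 0) + (if n < N then Ψ (xs n) else 0)
        by_cases hn : n < N <;> simp [hn]
      map_smul' := by
        intro a Φ
        apply Subtype.ext
        funext n
        show (if n < N then (a • Φ) (xs n) else 0) = a • (if n < N then Φ (xs n) else 0)
        by_cases hn : n < N <;> simp [hn] } with hT
  have Tbound : ∀ N : ℕ, ∀ Φ, ‖T N Φ‖ ≤ ((∑ n ∈ Finset.range N, ‖xs n‖ ^ p) ^ (1/p)) * ‖Φ‖ := by
    intro N Φ
    rw [show ‖T N Φ‖ = (∑ n ∈ Finset.range N, ‖Φ (xs n)‖ ^ p) ^ (1/p) from normfun N Φ]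
    have h1 : ∑ n ∈ Finset.range N, ‖Φ (xs n)‖ ^ p
        ≤ ∑ n ∈ Finset.range N, ‖Φ‖ ^ p * ‖xs n‖ ^ p := by
      apply Finset.sum_le_sum
      intro n _
      rw [← Real.mul_rpow (norm_nonneg _) (norm_nonneg _)]
      exact Real.rpow_le_rpow (norm_nonneg _) (Φ.le_opNorm _) hp0.le
    calc (∑ n ∈ Finset.range N, ‖Φ (xs n)‖ ^ p) ^ (1/p)
        ≤ (‖Φ‖ ^ p * ∑ n ∈ Finset.range N, ‖xs n‖ ^ p) ^ (1/p) := by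
          apply Real.rpow_le_rpow (Finset.sum_nonneg fun n _ => Real.rpow_nonneg (norm_nonneg _) _)
            _ (by positivity)
          rw [Finset.mul_sum]; exact h1
      _ = ((∑ n ∈ Finset.range N, ‖xs n‖ ^ p) ^ (1/p)) * ‖Φ‖ := by
          rw [Real.mul_rpow (Real.rpow_nonneg (norm_nonneg _) _)
            (Finset.sum_nonneg fun n _ => Real.rpow_nonneg (norm_nonneg _) _),
            rpow_cancel' (norm_nonneg _) hp0.ne', mul_comm]
  set Tc : ∀ _ : ℕ, StrongDual 𝕜 X →L[𝕜] lp (fun _ : ℕ => 𝕜) P := fun N =>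
    LinearMap.mkContinuous (T N) _ (Tbound N) with hTc
  have hpt : ∀ Φ : StrongDual 𝕜 X, ∃ C, ∀ N : ℕ, ‖Tc N Φ‖ ≤ C := by
    intro Φ
    refine ⟨(∑' n, ‖Φ (xs n)‖ ^ p) ^ (1/p), fun N => ?_⟩
    have : ‖Tc N Φ‖ = (∑ n ∈ Finset.range N, ‖Φ (xs n)‖ ^ p) ^ (1/p) := normfun N Φ
    rw [this]
    apply Real.rpow_le_rpow (Finset.sum_nonneg fun n _ => Real.rpow_nonneg (norm_nonneg _) _)
      (Summable.sum_le_tsum _ (fun n _ => Real.rpow_nonneg (norm_nonneg _) _) (h Φ)) (by positivity)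
  obtain ⟨C, hC⟩ := banach_steinhaus hpt
  have hC0 : 0 ≤ C := le_trans (norm_nonneg (Tc 0)) (hC 0)
  refine ⟨C, hC0, fun Φ => ?_⟩
  apply Summable.tsum_le_of_sum_range_le (h Φ)
  intro N
  have h1 : ‖Tc N Φ‖ ≤ C * ‖Φ‖ := (Tc N).le_of_opNorm_le (hC N) Φ
  have h2 : (∑ n ∈ Finset.range N, ‖Φ (xs n)‖ ^ p) ^ (1/p) ≤ C * ‖Φ‖ := by
    rw [← normfun N Φ]; exact h1
  calc ∑ n ∈ Finset.range N, ‖Φ (xs n)‖ ^ p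
      = ((∑ n ∈ Finset.range N, ‖Φ (xs n)‖ ^ p) ^ (1/p)) ^ p :=
        (rpow_cancel (Finset.sum_nonneg fun n _ => Real.rpow_nonneg (norm_nonneg _) _) hp0.ne').symm
    _ ≤ (C * ‖Φ‖) ^ p :=
        Real.rpow_le_rpow (Real.rpow_nonneg (Finset.sum_nonneg fun n _ =>
          Real.rpow_nonneg (norm_nonneg _) _) _) h2 hp0.le


lemma weak_sum_bound (hp : 1 ≤ p) {xs : ℕ → StrongDual 𝕜 E} (h : WeaklySummable 𝕜 p xs) :
    ∃ C : ℝ, 0 ≤ C ∧ ∀ Φ : StrongDual 𝕜 (StrongDual 𝕜 E), ∑' n, ‖Φ (xs n)‖ ^ p ≤ (C * ‖Φ‖) ^ p :=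
  weak_sum_bound_aux hp h

lemma weakNorm_bddAbove (hp : 1 ≤ p) {xs : ℕ → StrongDual 𝕜 E} (h : WeaklySummable 𝕜 p xs) :
    BddAbove (Set.range fun φ : {φ : StrongDual 𝕜 (StrongDual 𝕜 E) // ‖φ‖ ≤ 1} =>
      (∑' n, ‖φ.1 (xs n)‖ ^ p) ^ (1 / p)) := by
  have hp0 : 0 < p := lt_of_lt_of_le one_pos hp
  obtain ⟨C, hC0, hC⟩ := weak_sum_bound hp h
  refine ⟨C, ?_⟩
  rintro y ⟨φ, rfl⟩
  calc (∑' n, ‖φ.1 (xs n)‖ ^ p) ^ (1/p)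
      ≤ ((C * ‖φ.1‖) ^ p) ^ (1/p) :=
        Real.rpow_le_rpow ((tsum_nonneg fun _ => Real.rpow_nonneg (norm_nonneg _) _)) (hC φ.1) (by positivity)
    _ = C * ‖φ.1‖ := rpow_cancel' (by positivity) hp0.ne'
    _ ≤ C * 1 := by
        apply mul_le_mul_of_nonneg_left φ.2 hC0
    _ = C := mul_one C

lemma le_weakNorm (hp : 1 ≤ p) {xs : ℕ → StrongDual 𝕜 E} (h : WeaklySummable 𝕜 p xs)
    (Φ : StrongDual 𝕜 (StrongDual 𝕜 E)) (hΦ : ‖Φ‖ ≤ 1) :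
    (∑' n, ‖Φ (xs n)‖ ^ p) ^ (1 / p) ≤ weakNorm 𝕜 p xs :=
  le_ciSup (weakNorm_bddAbove hp h) (⟨Φ, hΦ⟩ : {φ : StrongDual 𝕜 (StrongDual 𝕜 E) // ‖φ‖ ≤ 1})

lemma weakNorm_nonneg (xs : ℕ → StrongDual 𝕜 E) : 0 ≤ weakNorm 𝕜 p xs :=
  Real.iSup_nonneg fun φ => Real.rpow_nonneg ((tsum_nonneg fun _ => Real.rpow_nonneg (norm_nonneg _) _)) _

/-- If the weak norm is at most one, every functional evaluation sum is controlled. -/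
lemma weak_le_one (hp : 1 ≤ p) {xs : ℕ → StrongDual 𝕜 E} (h : WeaklySummable 𝕜 p xs)
    (hn : weakNorm 𝕜 p xs ≤ 1) (Φ : StrongDual 𝕜 (StrongDual 𝕜 E)) :
    ∑' n, ‖Φ (xs n)‖ ^ p ≤ ‖Φ‖ ^ p := by
  have hp0 : 0 < p := lt_of_lt_of_le one_pos hp
  have key : ∀ Ψ : StrongDual 𝕜 (StrongDual 𝕜 E), ‖Ψ‖ ≤ 1 → ∑' n, ‖Ψ (xs n)‖ ^ p ≤ 1 := by
    intro Ψ hΨ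
    have h1 : (∑' n, ‖Ψ (xs n)‖ ^ p) ^ (1/p) ≤ 1 := le_trans (le_weakNorm hp h Ψ hΨ) hn
    calc ∑' n, ‖Ψ (xs n)‖ ^ p
        = ((∑' n, ‖Ψ (xs n)‖ ^ p) ^ (1/p)) ^ p := (rpow_cancel ((tsum_nonneg fun _ => Real.rpow_nonneg (norm_nonneg _) _)) hp0.ne').symm
      _ ≤ 1 ^ p := Real.rpow_le_rpow (Real.rpow_nonneg ((tsum_nonneg fun _ => Real.rpow_nonneg (norm_nonneg _) _)) _) h1 hp0.le
      _ = 1 := Real.one_rpow p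
  rcases eq_or_ne Φ 0 with rfl | hΦ0
  · simp [Real.zero_rpow hp0.ne', Real.rpow_nonneg]
    exact Real.rpow_nonneg (norm_nonneg (0 : StrongDual 𝕜 (StrongDual 𝕜 E))) _
  · have hnz : ‖Φ‖ ≠ 0 := fun h => hΦ0 ((ContinuousLinearMap.opNorm_zero_iff Φ).mp h)
    have hn0 : 0 < ‖Φ‖ := lt_of_le_of_ne (norm_nonneg Φ) (Ne.symm hnz)
    set Ψ : StrongDual 𝕜 (StrongDual 𝕜 E) := ((‖Φ‖⁻¹ : ℝ) : 𝕜) • Φ with hΨdef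
    have hΨn : ‖Ψ‖ ≤ 1 := by
      refine ContinuousLinearMap.opNorm_le_bound _ zero_le_one fun y => ?_
      rw [hΨdef, ContinuousLinearMap.smul_apply, smul_eq_mul, norm_mul, RCLike.norm_ofReal,
        abs_of_nonneg (by positivity), one_mul]
      calc ‖Φ‖⁻¹ * ‖Φ y‖ ≤ ‖Φ‖⁻¹ * (‖Φ‖ * ‖y‖) :=
            mul_le_mul_of_nonneg_left (Φ.le_opNorm y) (by positivity)
        _ = ‖y‖ := by field_simp
    have h2 := key Ψ hΨn
    have h3 : ∀ n, ‖Ψ (xs n)‖ ^ p = ‖Φ‖⁻¹ ^ p * ‖Φ (xs n)‖ ^ p := by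
      intro n
      rw [hΨdef]
      simp only [ContinuousLinearMap.smul_apply, norm_smul, RCLike.norm_ofReal,
        abs_of_nonneg (inv_nonneg.mpr hn0.le)]
      rw [Real.mul_rpow (by positivity) (norm_nonneg _)]
    rw [tsum_congr h3, tsum_mul_left] at h2
    rw [Real.inv_rpow (norm_nonneg Φ)] at h2
    calc ∑' n, ‖Φ (xs n)‖ ^ p
        = (‖Φ‖ ^ p) * ((‖Φ‖ ^ p)⁻¹ * ∑' n, ‖Φ (xs n)‖ ^ p) := by
          rw [← mul_assoc, mul_inv_cancel₀ (by positivity), one_mul]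
      _ ≤ (‖Φ‖ ^ p) * 1 := mul_le_mul_of_nonneg_left h2 (by positivity)
      _ = ‖Φ‖ ^ p := mul_one _

/-- `(s+t)^r ≤ 2^r (s^r + t^r)` for nonnegative reals. -/
lemma add_rpow_le {s t r : ℝ} (hs : 0 ≤ s) (ht : 0 ≤ t) (hr : 0 ≤ r) :
    (s + t) ^ r ≤ (2:ℝ) ^ r * (s ^ r + t ^ r) := by
  have h1 : s + t ≤ 2 * max s t := by
    rcases max_cases s t with ⟨hm, hst⟩ | ⟨hm, hst⟩ <;> rw [hm] <;> nlinarith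
  calc (s + t) ^ r ≤ (2 * max s t) ^ r :=
        Real.rpow_le_rpow (by positivity) h1 hr
    _ = (2:ℝ) ^ r * (max s t) ^ r := Real.mul_rpow (by norm_num) (le_max_of_le_left hs)
    _ ≤ (2:ℝ) ^ r * (s ^ r + t ^ r) := by
        apply mul_le_mul_of_nonneg_left _ (Real.rpow_nonneg (by norm_num) _)
        rcases max_cases s t with ⟨hm, hst⟩ | ⟨hm, hst⟩ <;> rw [hm]
        · nlinarith [Real.rpow_nonneg ht r]
        · nlinarith [Real.rpow_nonneg hs r]

lemma MidSummable.sub (hp : 1 ≤ p) (hq : 1 ≤ q) {x y : ℕ → E}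
    (hx : MidSummable 𝕜 q p x) (hy : MidSummable 𝕜 q p y) :
    MidSummable 𝕜 q p (fun j => x j - y j) := by
  intro xs hxs
  have hp0 : 0 < p := lt_of_lt_of_le one_pos hp
  have hq0 : 0 < q := lt_of_lt_of_le one_pos hq
  have hqp : (0:ℝ) ≤ q / p := by positivity
  set A : ℕ → ℝ := fun j => ∑' n, ‖xs n (x j)‖ ^ p with hA
  set B : ℕ → ℝ := fun j => ∑' n, ‖xs n (y j)‖ ^ p with hB
  have hAnn : ∀ j, 0 ≤ A j := fun j => tsum_nonneg fun n => Real.rpow_nonneg (norm_nonneg _) _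
  have hBnn : ∀ j, 0 ≤ B j := fun j => tsum_nonneg fun n => Real.rpow_nonneg (norm_nonneg _) _
  have inner : ∀ j, ∑' n, ‖xs n (x j - y j)‖ ^ p ≤ (2:ℝ) ^ p * (A j + B j) := by
    intro j
    have hle : ∀ n, ‖xs n (x j - y j)‖ ^ p
        ≤ (2:ℝ)^p * (‖xs n (x j)‖ ^ p + ‖xs n (y j)‖ ^ p) := by
      intro n
      calc ‖xs n (x j - y j)‖ ^ p ≤ (‖xs n (x j)‖ + ‖xs n (y j)‖) ^ p := by
            apply Real.rpow_le_rpow (norm_nonneg _) _ hp0.le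
            rw [map_sub]; exact norm_sub_le _ _
        _ ≤ (2:ℝ)^p * (‖xs n (x j)‖ ^ p + ‖xs n (y j)‖ ^ p) :=
            add_rpow_le (norm_nonneg _) (norm_nonneg _) hp0.le
    calc ∑' n, ‖xs n (x j - y j)‖ ^ p
        ≤ ∑' n, (2:ℝ)^p * (‖xs n (x j)‖ ^ p + ‖xs n (y j)‖ ^ p) :=
          Summable.tsum_le_tsum hle (hxs.point _)
            (((hxs.point (x j)).add (hxs.point (y j))).mul_left _)
      _ = (2:ℝ)^p * (A j + B j) := by
          rw [tsum_mul_left, Summable.tsum_add (hxs.point (x j)) (hxs.point (y j))]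
  have h1 : ∀ j, (0:ℝ) ≤ (∑' n, ‖xs n (x j - y j)‖ ^ p) ^ (q/p) :=
    fun j => Real.rpow_nonneg (tsum_nonneg fun n => Real.rpow_nonneg (norm_nonneg _) _) _
  have h2 : ∀ j, (∑' n, ‖xs n (x j - y j)‖ ^ p) ^ (q/p)
      ≤ (2:ℝ)^q * ((2:ℝ)^(q/p) * (A j ^ (q/p) + B j ^ (q/p))) := by
    intro j
    calc (∑' n, ‖xs n (x j - y j)‖ ^ p) ^ (q/p)
        ≤ ((2:ℝ)^p * (A j + B j)) ^ (q/p) :=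
          Real.rpow_le_rpow (tsum_nonneg fun n => Real.rpow_nonneg (norm_nonneg _) _)
            (inner j) hqp
      _ = (2:ℝ)^q * (A j + B j) ^ (q/p) := by
          rw [Real.mul_rpow (by positivity) (add_nonneg (hAnn j) (hBnn j)),
            rpow_div_cancel (by norm_num) hp0.ne' q]
      _ ≤ (2:ℝ)^q * ((2:ℝ)^(q/p) * (A j ^ (q/p) + B j ^ (q/p))) :=
          mul_le_mul_of_nonneg_left (add_rpow_le (hAnn j) (hBnn j) hqp) (by positivity)
  have h3 : Summable fun j => (2:ℝ)^q * ((2:ℝ)^(q/p) * (A j ^ (q/p) + B j ^ (q/p))) :=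
    (((hx xs hxs).add (hy xs hxs)).mul_left _).mul_left _
  exact Summable.of_nonneg_of_le h1 h2 h3

lemma midNorm_nonneg (x : ℕ → E) : 0 ≤ midNorm 𝕜 q p x :=
  Real.iSup_nonneg fun xs => Real.rpow_nonneg
    (tsum_nonneg fun j => Real.rpow_nonneg
      (tsum_nonneg fun n => Real.rpow_nonneg (norm_nonneg _) _) _) _

set_option maxHeartbeats 2000000 in
lemma midNorm_bddAbove (hp : 1 ≤ p) (hq : 1 ≤ q) {x : ℕ → E} (hx : MidSummable 𝕜 q p x) :
    BddAbove (Set.range fun xs : {xs : ℕ → StrongDual 𝕜 E // WeaklySummable 𝕜 p xs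
        ∧ weakNorm 𝕜 p xs ≤ 1} =>
      (∑' j, (∑' n, ‖xs.1 n (x j)‖ ^ p) ^ (q / p)) ^ (1 / q)) := by
  have hp0 : 0 < p := lt_of_lt_of_le one_pos hp
  have hq0 : 0 < q := lt_of_lt_of_le one_pos hq
  have hqp : (0:ℝ) ≤ q / p := by positivity
  by_contra hbdd
  rw [not_bddAbove_iff] at hbdd
  have hex : ∀ k : ℕ, ∃ xs : ℕ → StrongDual 𝕜 E, WeaklySummable 𝕜 p xs ∧ weakNorm 𝕜 p xs ≤ 1 ∧
      (4:ℝ) ^ k < (∑' j, (∑' n, ‖xs n (x j)‖ ^ p) ^ (q / p)) ^ (1 / q) := by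
    intro k
    obtain ⟨y, ⟨xs, rfl⟩, hy⟩ := hbdd ((4:ℝ) ^ k)
    exact ⟨xs.1, xs.2.1, xs.2.2, hy⟩
  choose xs hxs1 hxs2 hxs3 using hex
  set S : ℕ → ℝ := fun k => ∑' j, (∑' n, ‖xs k n (x j)‖ ^ p) ^ (q / p) with hS
  have hSnn : ∀ k, 0 ≤ S k := fun k => tsum_nonneg fun j => Real.rpow_nonneg
    (tsum_nonneg fun n => Real.rpow_nonneg (norm_nonneg _) _) _
  have hSge : ∀ k, ((4:ℝ) ^ k) ^ q ≤ S k := by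
    intro k
    have h1 : ((4:ℝ) ^ k) ^ q ≤ (S k ^ (1/q)) ^ q :=
      Real.rpow_le_rpow (by positivity) (hxs3 k).le hq0.le
    rwa [rpow_cancel (hSnn k) hq0.ne'] at h1
  -- glue the sequences
  set c : ℕ → ℝ := fun k => ((2:ℝ) ^ k)⁻¹ with hc
  have hc0 : ∀ k, 0 < c k := fun k => by
    show (0:ℝ) < ((2:ℝ) ^ k)⁻¹
    positivity
  set e : ℕ ≃ ℕ × ℕ := (Denumerable.eqv (ℕ × ℕ)).symm with he
  set ys : ℕ → StrongDual 𝕜 E := fun m => ((c (e m).1 : ℝ) : 𝕜) • xs (e m).1 ((e m).2) with hys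
  have hcp : ∀ k : ℕ, (c k) ^ p = ((2:ℝ)^(-p)) ^ k := by
    intro k
    show (((2:ℝ) ^ k)⁻¹) ^ p = ((2:ℝ)^(-p)) ^ k
    rw [← Real.rpow_natCast (2:ℝ) k, ← Real.rpow_neg (by norm_num : (0:ℝ) ≤ 2),
      ← Real.rpow_mul (by norm_num : (0:ℝ) ≤ 2),
      ← Real.rpow_natCast ((2:ℝ)^(-p)) k, ← Real.rpow_mul (by norm_num : (0:ℝ) ≤ 2)]
    ring_nf
  have hgeo : Summable fun k : ℕ => ((2:ℝ)^(-p)) ^ k := by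
    apply summable_geometric_of_lt_one (by positivity)
    exact Real.rpow_lt_one_of_one_lt_of_neg one_lt_two (by linarith)
  have hG : ∀ Φ : StrongDual 𝕜 (StrongDual 𝕜 E),
      Summable fun kn : ℕ × ℕ => (c kn.1) ^ p * ‖Φ (xs kn.1 kn.2)‖ ^ p := by
    intro Φ
    apply (summable_prod_of_nonneg (fun kn =>
      mul_nonneg (Real.rpow_nonneg (hc0 _).le _) (Real.rpow_nonneg (norm_nonneg _) _))).mpr
    constructor
    · intro k
      exact (((hxs1 k) Φ).mul_left ((c k) ^ p)).congr fun n => rfl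
    · apply Summable.of_nonneg_of_le
        (fun k => tsum_nonneg fun n =>
          mul_nonneg (Real.rpow_nonneg (hc0 _).le _) (Real.rpow_nonneg (norm_nonneg _) _))
        (fun k => ?_) (hgeo.mul_right (‖Φ‖ ^ p))
      calc (∑' n : ℕ, c (k, n).1 ^ p * ‖Φ (xs (k, n).1 (k, n).2)‖ ^ p)
          = ∑' n : ℕ, (c k) ^ p * ‖Φ (xs k n)‖ ^ p := tsum_congr fun n => rfl
        _ = (c k) ^ p * ∑' n, ‖Φ (xs k n)‖ ^ p := tsum_mul_left
        _ ≤ (c k) ^ p * ‖Φ‖ ^ p :=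
            mul_le_mul_of_nonneg_left (weak_le_one hp (hxs1 k) (hxs2 k) Φ)
              (Real.rpow_nonneg (hc0 k).le p)
        _ = ((2:ℝ)^(-p)) ^ k * ‖Φ‖ ^ p := by rw [hcp k]
  have hysw : WeaklySummable 𝕜 p ys := by
    intro Φ
    have h1 : Summable fun m =>
        (fun kn : ℕ × ℕ => (c kn.1) ^ p * ‖Φ (xs kn.1 kn.2)‖ ^ p) (e m) :=
      (e.summable_iff).mpr (hG Φ)
    apply h1.congr
    intro m
    show (c (e m).1) ^ p * ‖Φ (xs (e m).1 (e m).2)‖ ^ p = ‖Φ (ys m)‖ ^ p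
    simp only [hys, _root_.map_smul, smul_eq_mul, norm_mul, RCLike.norm_ofReal]
    rw [abs_of_pos (hc0 _), Real.mul_rpow (hc0 _).le (norm_nonneg _)]
  have hT := hx ys hysw
  set T : ℝ := ∑' j, (∑' m, ‖ys m (x j)‖ ^ p) ^ (q/p) with hTdef
  have hTk : ∀ k : ℕ, ((2:ℝ)^q) ^ k ≤ T := by
    intro k
    -- inner pointwise bound
    have hGx : ∀ j, Summable fun kn : ℕ × ℕ => (c kn.1) ^ p * ‖xs kn.1 kn.2 (x j)‖ ^ p := by
      intro j
      have := hG (NormedSpace.inclusionInDoubleDual 𝕜 E (x j))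
      simpa only [NormedSpace.dual_def] using this
    have hinner : ∀ j, (c k) ^ p * (∑' n, ‖xs k n (x j)‖ ^ p)
        ≤ ∑' m, ‖ys m (x j)‖ ^ p := by
      intro j
      have he1 : ∑' m, ‖ys m (x j)‖ ^ p
          = ∑' kn : ℕ × ℕ, (c kn.1) ^ p * ‖xs kn.1 kn.2 (x j)‖ ^ p := by
        rw [← e.tsum_eq (fun kn : ℕ × ℕ => (c kn.1) ^ p * ‖xs kn.1 kn.2 (x j)‖ ^ p)]
        apply tsum_congr
        intro m
        simp only [hys, ContinuousLinearMap.smul_apply, norm_smul, RCLike.norm_ofReal]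
        rw [abs_of_pos (hc0 _), Real.mul_rpow (hc0 _).le (norm_nonneg _)]
      rw [he1, ← tsum_mul_left]
      exact Summable.tsum_le_tsum_of_inj
        (f := fun n : ℕ => (c k) ^ p * ‖xs k n (x j)‖ ^ p)
        (g := fun kn : ℕ × ℕ => (c kn.1) ^ p * ‖xs kn.1 kn.2 (x j)‖ ^ p)
        (fun n => (k, n))
        (fun a b hab => (Prod.ext_iff.mp hab).2)
        (fun kn _ => mul_nonneg (Real.rpow_nonneg (hc0 _).le _)
          (Real.rpow_nonneg (norm_nonneg _) _))
        (fun n => le_refl _)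
        (((hxs1 k).point (x j)).mul_left _)
        (hGx j)
    have houter : ∀ j, (c k) ^ q * ((∑' n, ‖xs k n (x j)‖ ^ p) ^ (q/p))
        ≤ (∑' m, ‖ys m (x j)‖ ^ p) ^ (q/p) := by
      intro j
      have h2 : ((c k) ^ p * (∑' n, ‖xs k n (x j)‖ ^ p)) ^ (q/p)
          ≤ (∑' m, ‖ys m (x j)‖ ^ p) ^ (q/p) :=
        Real.rpow_le_rpow (mul_nonneg (Real.rpow_nonneg (hc0 k).le _)
          (tsum_nonneg fun n => Real.rpow_nonneg (norm_nonneg _) _)) (hinner j) hqp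
      rwa [Real.mul_rpow (Real.rpow_nonneg (hc0 k).le _)
        (tsum_nonneg fun n => Real.rpow_nonneg (norm_nonneg _) _),
        rpow_div_cancel (hc0 k).le hp0.ne' q] at h2
    have hsum : (c k) ^ q * S k ≤ T := by
      have h4 : (∑' j, (c k) ^ q * ((∑' n, ‖xs k n (x j)‖ ^ p) ^ (q/p))) ≤ T :=
        Summable.tsum_le_tsum houter ((hx (xs k) (hxs1 k)).mul_left _) hT
      calc (c k) ^ q * S k
          = ∑' j, (c k) ^ q * ((∑' n, ‖xs k n (x j)‖ ^ p) ^ (q/p)) := tsum_mul_left.symm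
        _ ≤ T := h4
    calc ((2:ℝ)^q) ^ k = (c k) ^ q * ((4:ℝ) ^ k) ^ q := by
          rw [← Real.mul_rpow (hc0 k).le (by positivity)]
          rw [show c k * (4:ℝ)^k = (2:ℝ)^k by
            show ((2:ℝ) ^ k)⁻¹ * (4:ℝ)^k = (2:ℝ)^k
            rw [show (4:ℝ)^k = 2^k * 2^k from by rw [← mul_pow]; norm_num]
            field_simp]
          rw [← Real.rpow_natCast (2:ℝ) k, ← Real.rpow_mul (by norm_num : (0:ℝ) ≤ 2),
            mul_comm (k:ℝ) q, Real.rpow_mul (by norm_num : (0:ℝ) ≤ 2), Real.rpow_natCast]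
      _ ≤ (c k) ^ q * S k :=
          mul_le_mul_of_nonneg_left (hSge k) (Real.rpow_nonneg (hc0 k).le q)
      _ ≤ T := hsum
  obtain ⟨k, hk⟩ := pow_unbounded_of_one_lt T
    ((Real.one_lt_rpow_iff_of_pos two_pos).mpr (Or.inl ⟨one_lt_two, hq0⟩))
  exact absurd (hTk k) (not_le.mpr hk)

lemma value_le_midNorm (hp : 1 ≤ p) (hq : 1 ≤ q) {x : ℕ → E} (hx : MidSummable 𝕜 q p x)
    {xs : ℕ → StrongDual 𝕜 E} (h1 : WeaklySummable 𝕜 p xs) (h2 : weakNorm 𝕜 p xs ≤ 1) :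
    (∑' j, (∑' n, ‖xs n (x j)‖ ^ p) ^ (q / p)) ^ (1 / q) ≤ midNorm 𝕜 q p x :=
  le_ciSup (midNorm_bddAbove hp hq hx)
    (⟨xs, h1, h2⟩ : {xs : ℕ → StrongDual 𝕜 E // WeaklySummable 𝕜 p xs ∧ weakNorm 𝕜 p xs ≤ 1})

lemma norm_le_midNorm (hp : 1 ≤ p) (hq : 1 ≤ q) {x : ℕ → E} (hx : MidSummable 𝕜 q p x)
    (j0 : ℕ) : ‖x j0‖ ≤ midNorm 𝕜 q p x := by
  have hp0 : 0 < p := lt_of_lt_of_le one_pos hp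
  have hq0 : 0 < q := lt_of_lt_of_le one_pos hq
  rcases eq_or_ne (x j0) 0 with h0 | h0
  · rw [h0, norm_zero]; exact midNorm_nonneg x
  obtain ⟨ψ, hψ1, hψ2⟩ := exists_dual_vector 𝕜 (x j0) (norm_ne_zero_iff.mpr h0)
  set xs : ℕ → StrongDual 𝕜 E := fun n => if n = 0 then ψ else 0 with hxsdef
  have hw : WeaklySummable 𝕜 p xs := by
    intro Φ
    apply summable_of_ne_finset_zero (s := {0})
    intro n hn
    simp only [Finset.mem_singleton] at hn
    simp only [hxsdef, if_neg hn, map_zero, norm_zero]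
    exact Real.zero_rpow hp0.ne'
  have hsingle : ∀ (Φ : StrongDual 𝕜 (StrongDual 𝕜 E)), ∑' n, ‖Φ (xs n)‖ ^ p = ‖Φ ψ‖ ^ p := by
    intro Φ
    rw [tsum_eq_single 0 ?_]
    · simp [hxsdef]
    · intro n hn
      simp only [hxsdef, if_neg hn, map_zero, norm_zero]
      exact Real.zero_rpow hp0.ne'
  have hwn : weakNorm 𝕜 p xs ≤ 1 := by
    apply Real.iSup_le _ zero_le_one
    intro Φ
    rw [hsingle Φ.1, rpow_cancel' (norm_nonneg _) hp0.ne']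
    calc ‖Φ.1 ψ‖ ≤ ‖Φ.1‖ * ‖ψ‖ := Φ.1.le_opNorm ψ
      _ ≤ 1 * 1 := mul_le_mul Φ.2 (le_of_eq hψ1) (norm_nonneg _) zero_le_one
      _ = 1 := one_mul 1
  have hval : ∀ j, (∑' n, ‖xs n (x j)‖ ^ p) ^ (q/p) = ‖ψ (x j)‖ ^ q := by
    intro j
    have h6 := hsingle (NormedSpace.inclusionInDoubleDual 𝕜 E (x j))
    simp only [NormedSpace.dual_def] at h6
    rw [h6, rpow_div_cancel (norm_nonneg _) hp0.ne' q]
  have hsum : Summable fun j => ‖ψ (x j)‖ ^ q :=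
    (hx xs hw).congr fun j => hval j
  have h5 : ‖ψ (x j0)‖ = ‖x j0‖ := by
    rw [hψ2, RCLike.norm_ofReal, abs_of_nonneg (norm_nonneg _)]
  have hterm : ‖x j0‖ ^ q ≤ ∑' j, ‖ψ (x j)‖ ^ q := by
    calc ‖x j0‖ ^ q = ‖ψ (x j0)‖ ^ q := by rw [h5]
      _ ≤ ∑' j, ‖ψ (x j)‖ ^ q :=
          Summable.le_tsum hsum j0 fun j _ => Real.rpow_nonneg (norm_nonneg _) _
  calc ‖x j0‖ = (‖x j0‖ ^ q) ^ (1/q) := (rpow_cancel' (norm_nonneg _) hq0.ne').symm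
    _ ≤ (∑' j, ‖ψ (x j)‖ ^ q) ^ (1/q) :=
        Real.rpow_le_rpow (Real.rpow_nonneg (norm_nonneg _) _) hterm (by positivity)
    _ = (∑' j, (∑' n, ‖xs n (x j)‖ ^ p) ^ (q/p)) ^ (1/q) := by
        rw [tsum_congr hval]
    _ ≤ midNorm 𝕜 q p x := value_le_midNorm hp hq hx hw hwn

end Aux

/-- the space `ℓ_{q,p}^mid(E)` is complete: every Cauchy sequence (for the mid
`(q,p)`-norm) of mid `(q,p)`-summable sequences converges in the mid `(q,p)`-norm to a mid
`(q,p)`-summable sequence. -/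
theorem stmt11 [RCLike 𝕜] [NormedAddCommGroup E] [NormedSpace 𝕜 E] [CompleteSpace E]
    (p q : ℝ) (hp : 1 ≤ p) (hq : 1 ≤ q)
    (u : ℕ → ℕ → E) (hmid : ∀ m, MidSummable 𝕜 q p (u m))
    (hcauchy : ∀ ε : ℝ, 0 < ε → ∃ N : ℕ, ∀ m ≥ N, ∀ n ≥ N,
      midNorm 𝕜 q p (fun j => u m j - u n j) < ε) :
    ∃ v : ℕ → E, MidSummable 𝕜 q p v ∧
      Filter.Tendsto (fun m => midNorm 𝕜 q p fun j => u m j - v j)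
        Filter.atTop (nhds 0) := by
  have hp0 : 0 < p := lt_of_lt_of_le one_pos hp
  have hq0 : 0 < q := lt_of_lt_of_le one_pos hq
  have hqp : (0:ℝ) ≤ q / p := by positivity
  have hdiff : ∀ m n, MidSummable 𝕜 q p (fun j => u m j - u n j) :=
    fun m n => MidSummable.sub hp hq (hmid m) (hmid n)
  -- pointwise Cauchy, hence pointwise limits
  have hcs : ∀ j, CauchySeq fun m => u m j := by
    intro j
    rw [Metric.cauchySeq_iff]
    intro ε hε
    obtain ⟨N, hN⟩ := hcauchy ε hε
    refine ⟨N, fun m hm n hn => ?_⟩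
    calc dist (u m j) (u n j) = ‖u m j - u n j‖ := dist_eq_norm _ _
      _ ≤ midNorm 𝕜 q p (fun j => u m j - u n j) := norm_le_midNorm hp hq (hdiff m n) j
      _ < ε := hN m hm n hn
  choose v hv using fun j => cauchySeq_tendsto_of_complete (hcs j)
  -- the key tail estimate
  have key : ∀ ε : ℝ, 0 < ε → ∃ N : ℕ, ∀ m ≥ N, ∀ xs : ℕ → StrongDual 𝕜 E,
      WeaklySummable 𝕜 p xs → weakNorm 𝕜 p xs ≤ 1 →
      Summable (fun j => (∑' n, ‖xs n (u m j - v j)‖ ^ p) ^ (q/p)) ∧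
      ∑' j, (∑' n, ‖xs n (u m j - v j)‖ ^ p) ^ (q/p) ≤ ε ^ q := by
    intro ε hε
    obtain ⟨N, hN⟩ := hcauchy ε hε
    refine ⟨N, fun m hm xs hxsw hxsn => ?_⟩
    have stepA : ∀ (J : Finset ℕ) (K : ℕ), ∀ n' ≥ N,
        ∑ j ∈ J, (∑ n ∈ Finset.range K, ‖xs n (u m j - u n' j)‖ ^ p) ^ (q/p) ≤ ε ^ q := by
      intro J K n' hn'
      have hms := hdiff m n'
      have hsumm := hms xs hxsw
      have hle1 : ∀ j, (∑ n ∈ Finset.range K, ‖xs n (u m j - u n' j)‖ ^ p) ^ (q/p)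
          ≤ (∑' n, ‖xs n (u m j - u n' j)‖ ^ p) ^ (q/p) := fun j =>
        Real.rpow_le_rpow (Finset.sum_nonneg fun n _ => Real.rpow_nonneg (norm_nonneg _) _)
          (Summable.sum_le_tsum _ (fun n _ => Real.rpow_nonneg (norm_nonneg _) _) (hxsw.point _)) hqp
      have hle2 : ∑ j ∈ J, (∑' n, ‖xs n (u m j - u n' j)‖ ^ p) ^ (q/p)
          ≤ ∑' j, (∑' n, ‖xs n (u m j - u n' j)‖ ^ p) ^ (q/p) :=
        Summable.sum_le_tsum J (fun j _ => Real.rpow_nonneg (tsum_nonneg fun n =>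
          Real.rpow_nonneg (norm_nonneg _) _) _) hsumm
      have hval : (∑' j, (∑' n, ‖xs n (u m j - u n' j)‖ ^ p) ^ (q/p)) ≤ ε ^ q := by
        have h7 : (∑' j, (∑' n, ‖xs n (u m j - u n' j)‖ ^ p) ^ (q/p)) ^ (1/q) ≤ ε :=
          le_of_lt (lt_of_le_of_lt (value_le_midNorm hp hq hms hxsw hxsn) (hN m hm n' hn'))
        have hnn0 : (0:ℝ) ≤ ∑' j, (∑' n, ‖xs n (u m j - u n' j)‖ ^ p) ^ (q/p) :=
          tsum_nonneg fun j => Real.rpow_nonneg (tsum_nonneg fun n =>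
            Real.rpow_nonneg (norm_nonneg _) _) _
        have h8 := Real.rpow_le_rpow (Real.rpow_nonneg hnn0 _) h7 hq0.le
        rwa [rpow_cancel hnn0 hq0.ne'] at h8
      calc ∑ j ∈ J, (∑ n ∈ Finset.range K, ‖xs n (u m j - u n' j)‖ ^ p) ^ (q/p)
          ≤ ∑ j ∈ J, (∑' n, ‖xs n (u m j - u n' j)‖ ^ p) ^ (q/p) :=
            Finset.sum_le_sum fun j _ => hle1 j
        _ ≤ ε ^ q := le_trans hle2 hval
    have stepB : ∀ (J : Finset ℕ) (K : ℕ),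
        ∑ j ∈ J, (∑ n ∈ Finset.range K, ‖xs n (u m j - v j)‖ ^ p) ^ (q/p) ≤ ε ^ q := by
      intro J K
      have htend : Filter.Tendsto
          (fun n' => ∑ j ∈ J, (∑ n ∈ Finset.range K, ‖xs n (u m j - u n' j)‖ ^ p) ^ (q/p))
          Filter.atTop
          (nhds (∑ j ∈ J, (∑ n ∈ Finset.range K, ‖xs n (u m j - v j)‖ ^ p) ^ (q/p))) := by
        apply tendsto_finset_sum
        intro j _
        apply Filter.Tendsto.rpow_const _ (Or.inr hqp)
        apply tendsto_finset_sum
        intro n _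
        apply Filter.Tendsto.rpow_const _ (Or.inr hp0.le)
        exact (((xs n).continuous.tendsto _).comp ((hv j).const_sub (u m j))).norm
      apply le_of_tendsto htend
      filter_upwards [Filter.eventually_ge_atTop N] with n' hn'
      exact stepA J K n' hn'
    have stepC : ∀ J : Finset ℕ,
        ∑ j ∈ J, (∑' n, ‖xs n (u m j - v j)‖ ^ p) ^ (q/p) ≤ ε ^ q := by
      intro J
      have htend : Filter.Tendsto
          (fun K => ∑ j ∈ J, (∑ n ∈ Finset.range K, ‖xs n (u m j - v j)‖ ^ p) ^ (q/p))
          Filter.atTop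
          (nhds (∑ j ∈ J, (∑' n, ‖xs n (u m j - v j)‖ ^ p) ^ (q/p))) := by
        apply tendsto_finset_sum
        intro j _
        apply Filter.Tendsto.rpow_const _ (Or.inr hqp)
        exact (hxsw.point (u m j - v j)).hasSum.tendsto_sum_nat
      exact le_of_tendsto htend (Filter.Eventually.of_forall fun K => stepB J K)
    have hnn : ∀ j, 0 ≤ (∑' n, ‖xs n (u m j - v j)‖ ^ p) ^ (q/p) := fun j =>
      Real.rpow_nonneg (tsum_nonneg fun n => Real.rpow_nonneg (norm_nonneg _) _) _
    have hsummable : Summable fun j => (∑' n, ‖xs n (u m j - v j)‖ ^ p) ^ (q/p) :=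
      summable_of_sum_le hnn stepC
    exact ⟨hsummable, Summable.tsum_le_of_sum_le hsummable stepC⟩
  -- the limit is mid summable
  obtain ⟨N1, hN1⟩ := key 1 one_pos
  have hd : MidSummable 𝕜 q p (fun j => u N1 j - v j) := by
    intro ys hys
    set W := weakNorm 𝕜 p ys with hW
    have hW0 : 0 ≤ W := weakNorm_nonneg ys
    set cc : ℝ := W + 1 with hcc
    have hcc0 : 0 < cc := by rw [hcc]; linarith
    have hicc : 0 < cc⁻¹ := inv_pos.mpr hcc0
    set zs : ℕ → StrongDual 𝕜 E := fun n => ((cc⁻¹ : ℝ) : 𝕜) • ys n with hzs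
    have hzseq : ∀ (Φ : StrongDual 𝕜 (StrongDual 𝕜 E)) (n : ℕ),
        ‖Φ (zs n)‖ ^ p = cc⁻¹ ^ p * ‖Φ (ys n)‖ ^ p := by
      intro Φ n
      simp only [hzs, _root_.map_smul, smul_eq_mul, norm_mul, RCLike.norm_ofReal]
      rw [abs_of_pos hicc, Real.mul_rpow hicc.le (norm_nonneg _)]
    have hzsw : WeaklySummable 𝕜 p zs := by
      intro Φ
      exact ((hys Φ).mul_left (cc⁻¹ ^ p)).congr fun n => (hzseq Φ n).symm
    have hzsn : weakNorm 𝕜 p zs ≤ 1 := by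
      refine Real.iSup_le (fun Φ => ?_) zero_le_one
      have he : ∑' n, ‖Φ.1 (zs n)‖ ^ p = cc⁻¹ ^ p * ∑' n, ‖Φ.1 (ys n)‖ ^ p := by
        rw [← tsum_mul_left]
        exact tsum_congr fun n => hzseq Φ.1 n
      rw [he, Real.mul_rpow (Real.rpow_nonneg hicc.le _)
          (tsum_nonneg fun n => Real.rpow_nonneg (norm_nonneg _) _),
        rpow_cancel' hicc.le hp0.ne']
      have h9 : (∑' n, ‖Φ.1 (ys n)‖ ^ p) ^ (1/p) ≤ W := le_weakNorm hp hys Φ.1 Φ.2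
      calc cc⁻¹ * (∑' n, ‖Φ.1 (ys n)‖ ^ p) ^ (1/p)
          ≤ cc⁻¹ * W := mul_le_mul_of_nonneg_left h9 hicc.le
        _ ≤ cc⁻¹ * cc := mul_le_mul_of_nonneg_left (by rw [hcc]; linarith) hicc.le
        _ = 1 := inv_mul_cancel₀ hcc0.ne'
    obtain ⟨hsum1, -⟩ := hN1 N1 (le_refl N1) zs hzsw hzsn
    apply (hsum1.mul_left (cc ^ q)).congr
    intro j
    have he2 : ∑' n, ‖zs n (u N1 j - v j)‖ ^ p
        = cc⁻¹ ^ p * ∑' n, ‖ys n (u N1 j - v j)‖ ^ p := by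
      rw [← tsum_mul_left]
      apply tsum_congr
      intro n
      simp only [hzs, ContinuousLinearMap.smul_apply, norm_smul, RCLike.norm_ofReal]
      rw [abs_of_pos hicc, Real.mul_rpow hicc.le (norm_nonneg _)]
    have hone : (cc:ℝ) ^ q * (cc⁻¹) ^ q = 1 := by
      rw [← Real.mul_rpow hcc0.le hicc.le, mul_inv_cancel₀ hcc0.ne', Real.one_rpow]
    rw [he2, Real.mul_rpow (Real.rpow_nonneg hicc.le _)
        (tsum_nonneg fun n => Real.rpow_nonneg (norm_nonneg _) _),
      rpow_div_cancel hicc.le hp0.ne' q, ← mul_assoc, hone, one_mul]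
  have hvmid : MidSummable 𝕜 q p v := by
    have h10 : MidSummable 𝕜 q p (fun j => u N1 j - (u N1 j - v j)) :=
      MidSummable.sub hp hq (hmid N1) hd
    have h11 : (fun j => u N1 j - (u N1 j - v j)) = v := by
      funext j; exact sub_sub_cancel _ _
    rwa [h11] at h10
  refine ⟨v, hvmid, ?_⟩
  rw [Metric.tendsto_atTop]
  intro ε hε
  obtain ⟨N, hN⟩ := key (ε/2) (by linarith)
  refine ⟨N, fun m hm => ?_⟩
  have hub : midNorm 𝕜 q p (fun j => u m j - v j) ≤ ε/2 := by
    refine Real.iSup_le (fun xs => ?_) (by linarith)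
    obtain ⟨hs, hts⟩ := hN m hm xs.1 xs.2.1 xs.2.2
    calc (∑' j, (∑' n, ‖xs.1 n (u m j - v j)‖ ^ p) ^ (q/p)) ^ (1/q)
        ≤ ((ε/2) ^ q) ^ (1/q) :=
          Real.rpow_le_rpow (tsum_nonneg fun j => Real.rpow_nonneg
            (tsum_nonneg fun n => Real.rpow_nonneg (norm_nonneg _) _) _) hts (by positivity)
      _ = ε/2 := rpow_cancel' (by linarith) hq0.ne'
  have hlb : 0 ≤ midNorm 𝕜 q p (fun j => u m j - v j) := midNorm_nonneg _
  rw [Real.dist_eq, sub_zero, abs_of_nonneg hlb]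
  linarith
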